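/- Let a, b, r be positive integers. Then the polynomial [a]_q · [b]_{q^r} is unimodal if and only if a ≥ r(b − 1) or r divides a. -/
import Mathlib


open Polynomial

/-- The q-analog `[n]_q = 1 + q + ⋯ + q^(n-1)` as a polynomial in `ℤ[q]`. -/
noncomputable def qAnalog (n : ℕ) : Polynomial ℤ :=
  ∑ i ∈ Finset.range n, X ^ i

/-- The q-analog `[n]_{q^r} = 1 + q^r + ⋯ + q^(r(n-1))` as a polynomial in `ℤ[q]`. -/
noncomputable def qAnalogPow (n r : ℕ) : Polynomial ℤ :=
  ∑ i ∈ Finset.range n, X ^ (r * i)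

/-- A polynomial of degree `d` is symmetric if `c_k = c_{d-k}` for all `0 ≤ k ≤ d`. -/
def IsSymmPoly (P : Polynomial ℤ) : Prop :=
  ∀ k ≤ P.natDegree, P.coeff k = P.coeff (P.natDegree - k)

/-- A polynomial is unimodal if its coefficient sequence increases up to some
index `M` and decreases afterwards. -/
def IsUnimodalPoly (P : Polynomial ℤ) : Prop :=
  ∃ M : ℕ, (∀ k, k < M → P.coeff k ≤ P.coeff (k + 1)) ∧
    (∀ k, M ≤ k → P.coeff (k + 1) ≤ P.coeff k)

namespace QAux

def Sset (a b r k : ℕ) : Finset ℕ :=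
  (Finset.range b).filter (fun j => r*j ≤ k ∧ k < r*j + a)

def Dset (b r k : ℕ) : Finset ℕ :=
  (Finset.range b).filter (fun j => r*j ≤ k)

def Eset (a b r k : ℕ) : Finset ℕ :=
  (Finset.range b).filter (fun j => r*j + a ≤ k)

lemma coeff_eq (a b r k : ℕ) :
    (qAnalog a * qAnalogPow b r).coeff k = ((Sset a b r k).card : ℤ) := by
  rw [qAnalog, qAnalogPow, Finset.sum_mul_sum]
  simp only [← pow_add, Polynomial.finset_sum_coeff, Polynomial.coeff_X_pow]
  rw [Finset.sum_comm]
  have inner : ∀ j, (∑ i ∈ Finset.range a, if k = i + r*j then (1:ℤ) else 0)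
      = if r*j ≤ k ∧ k < r*j + a then 1 else 0 := by
    intro j
    rcases le_or_gt (r*j) k with h | h
    · have hiff : ∀ i : ℕ, (k = i + r*j) ↔ i = k - r*j := by intro i; omega
      simp only [hiff]
      rw [Finset.sum_ite_eq' (Finset.range a) (k - r*j) (fun _ => (1:ℤ))]
      simp only [Finset.mem_range]
      split_ifs with h1 h2 h2 <;> first | rfl | omega
    · rw [Finset.sum_eq_zero, if_neg (by omega)]
      intro i _
      rw [if_neg (by omega)]
  simp only [inner]
  rw [Finset.sum_boole]
  rfl

lemma E_subset_D (a b r k : ℕ) : Eset a b r k ⊆ Dset b r k := by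
  intro j hj
  simp only [Eset, Dset, Finset.mem_filter, Finset.mem_range] at hj ⊢
  omega

lemma Sset_eq (a b r k : ℕ) : Sset a b r k = Dset b r k \ Eset a b r k := by
  ext j
  simp only [Sset, Dset, Eset, Finset.mem_sdiff, Finset.mem_filter, Finset.mem_range]
  omega

lemma coeff_eq' (a b r k : ℕ) :
    (qAnalog a * qAnalogPow b r).coeff k
      = ((Dset b r k).card : ℤ) - ((Eset a b r k).card : ℤ) := by
  rw [coeff_eq, Sset_eq, Finset.card_sdiff_of_subset (E_subset_D a b r k)]
  have := Finset.card_le_card (E_subset_D a b r k)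
  omega

lemma Dset_card (b r k : ℕ) (hr : 0 < r) :
    (Dset b r k).card = min b (k/r + 1) := by
  have h : Dset b r k = Finset.range (min b (k/r + 1)) := by
    ext j
    simp only [Dset, Finset.mem_filter, Finset.mem_range, lt_min_iff]
    constructor
    · rintro ⟨h1, h2⟩
      refine ⟨h1, ?_⟩
      rw [Nat.lt_succ_iff, Nat.le_div_iff_mul_le hr, mul_comm]
      exact h2
    · rintro ⟨h1, h2⟩
      rw [Nat.lt_succ_iff, Nat.le_div_iff_mul_le hr, mul_comm] at h2
      exact ⟨h1, h2⟩
  rw [h, Finset.card_range]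

lemma E_mono (a b r : ℕ) {k k' : ℕ} (h : k ≤ k') : Eset a b r k ⊆ Eset a b r k' := by
  intro j hj
  simp only [Eset, Finset.mem_filter, Finset.mem_range] at hj ⊢
  omega

lemma D_step (b r k : ℕ) (hr : 0 < r) :
    (Dset b r (k+1)).card ≤ (Dset b r k).card + 1 := by
  have hsub : Dset b r (k+1) ⊆ insert ((k+1)/r) (Dset b r k) := by
    intro j hj
    simp only [Dset, Finset.mem_filter, Finset.mem_range, Finset.mem_insert] at hj ⊢
    rcases le_or_gt (r*j) k with h | h
    · exact Or.inr ⟨hj.1, h⟩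
    · have hj2 : r * j = k + 1 := by omega
      left
      rw [← hj2, Nat.mul_div_cancel_left j hr]
  calc (Dset b r (k+1)).card ≤ (insert ((k+1)/r) (Dset b r k)).card :=
        Finset.card_le_card hsub
    _ ≤ (Dset b r k).card + 1 := Finset.card_insert_le _ _

lemma D_full (b r k : ℕ) (h : r*(b-1) ≤ k) : (Dset b r k).card = b := by
  have hD : Dset b r k = Finset.range b := by
    rw [Dset, Finset.filter_true_of_mem]
    intro j hj
    rw [Finset.mem_range] at hj
    calc r*j ≤ r*(b-1) := Nat.mul_le_mul_left r (by omega)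
      _ ≤ k := h
  rw [hD, Finset.card_range]

lemma E_empty (a b r k : ℕ) (h : k < a) : Eset a b r k = ∅ := by
  rw [Eset, Finset.filter_false_of_mem]
  intro j _
  omega

lemma Eset_eq_D (a b r k : ℕ) (h : a ≤ k) : Eset a b r k = Dset b r (k - a) := by
  ext j
  simp only [Eset, Dset, Finset.mem_filter, Finset.mem_range]
  omega

lemma E_card2 (b r c k : ℕ) (hr : 0 < r) :
    (Eset (r*c) b r k).card = min b (k/r + 1 - c) := by
  have h : Eset (r*c) b r k = Finset.range (min b (k/r + 1 - c)) := by
    ext j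
    simp only [Eset, Finset.mem_filter, Finset.mem_range, lt_min_iff]
    have key : r*j + r*c ≤ k ↔ j + c ≤ k / r := by
      rw [Nat.le_div_iff_mul_le hr, add_mul, mul_comm j r, mul_comm c r]
    constructor
    · rintro ⟨h1, h2⟩
      rw [key] at h2
      exact ⟨h1, by omega⟩
    · rintro ⟨h1, h2⟩
      refine ⟨h1, key.mpr (by omega)⟩
  rw [h, Finset.card_range]

lemma inc_lemma (a b r k : ℕ) (h : k + 2 ≤ a) :
    (qAnalog a * qAnalogPow b r).coeff k ≤ (qAnalog a * qAnalogPow b r).coeff (k+1) := by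
  rw [coeff_eq, coeff_eq]
  have hsub : Sset a b r k ⊆ Sset a b r (k+1) := by
    intro j hj
    simp only [Sset, Finset.mem_filter, Finset.mem_range] at hj ⊢
    omega
  exact_mod_cast Finset.card_le_card hsub

lemma dec1 (a b r : ℕ) (ha : 1 ≤ a) (hb : 1 ≤ b) (hr : 1 ≤ r) (hab : r*(b-1) ≤ a) :
    ∀ k, a - 1 ≤ k →
      (qAnalog a * qAnalogPow b r).coeff (k+1) ≤ (qAnalog a * qAnalogPow b r).coeff k := by
  intro k hk
  rw [coeff_eq', coeff_eq']
  rcases eq_or_lt_of_le hk with h | h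
  · -- k = a - 1
    have hk1 : k + 1 = a := by omega
    have hE : Eset a b r k = ∅ := E_empty a b r k (by omega)
    have hE1 : (Eset a b r (k+1)).card = 1 := by
      rw [hk1, Eset_eq_D a b r a le_rfl, Nat.sub_self, Dset_card b r 0 hr]
      have : 0 / r = 0 := Nat.zero_div r
      omega
    have hD := D_step b r k hr
    rw [hE, hE1]
    simp only [Finset.card_empty]
    push_cast
    omega
  · -- a ≤ k
    have hDk : (Dset b r k).card = b := D_full b r k (by omega)
    have hDk1 : (Dset b r (k+1)).card = b := D_full b r (k+1) (by omega)
    have hEm := Finset.card_le_card (E_mono a b r (show k ≤ k + 1 by omega))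
    rw [hDk, hDk1]
    omega

lemma dec2 (b r c : ℕ) (hb : 1 ≤ b) (hr : 1 ≤ r) (hc : 1 ≤ c) :
    ∀ k, r*c - 1 ≤ k →
      (qAnalog (r*c) * qAnalogPow b r).coeff (k+1)
        ≤ (qAnalog (r*c) * qAnalogPow b r).coeff k := by
  intro k hk
  rw [coeff_eq', coeff_eq', Dset_card b r k hr, Dset_card b r (k+1) hr,
    E_card2 b r c k hr, E_card2 b r c (k+1) hr]
  have h1 : k / r ≤ (k+1) / r := Nat.div_le_div_right (Nat.le_succ k)
  have h2 : (k+1) / r ≤ k / r + 1 := by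
    have := Nat.div_le_div_right (c := r) (show k + 1 ≤ k + r by omega)
    rwa [Nat.add_div_right k hr] at this
  have h3 : c - 1 ≤ k / r := by
    rw [Nat.le_div_iff_mul_le hr, Nat.sub_mul, one_mul, mul_comm]
    omega
  omega

lemma decChain {f : ℕ → ℤ} {M : ℕ} (h : ∀ k, M ≤ k → f (k+1) ≤ f k)
    {m n : ℕ} (hm : M ≤ m) (hmn : m ≤ n) : f n ≤ f m := by
  induction n, hmn using Nat.le_induction with
  | base => exact le_refl _
  | succ n hn ih => exact le_trans (h n (hm.trans hn)) ih

lemma incChain {f : ℕ → ℤ} {M : ℕ} (h : ∀ k, k < M → f k ≤ f (k+1)) :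
    ∀ m n, m ≤ n → n ≤ M → f m ≤ f n := by
  intro m n hmn
  induction n, hmn using Nat.le_induction with
  | base => intro _; exact le_refl _
  | succ n hn ih => intro hM; exact le_trans (ih (by omega)) (h n (by omega))

end QAux

open QAux

theorem qAnalog_mul_qAnalogPow_unimodal_iff (a b r : ℕ)
    (ha : 1 ≤ a) (hb : 1 ≤ b) (hr : 1 ≤ r) :
    IsUnimodalPoly (qAnalog a * qAnalogPow b r) ↔ (r * (b - 1) ≤ a ∨ r ∣ a) := by
  constructor
  · -- contrapositive: not (≥ or dvd) → not unimodal
    intro hU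
    by_contra hcon
    push_neg at hcon
    obtain ⟨hlt, hndvd⟩ := hcon
    have hlt' : a < r * (b-1) := hlt
    set p := a / r with hp
    set s := a % r with hs
    have hsr : s < r := Nat.mod_lt a (by omega)
    have hs1 : 1 ≤ s := by
      by_contra h
      exact hndvd (Nat.dvd_of_mod_eq_zero (by omega))
    have hdm : r * p + s = a := Nat.div_add_mod a r
    have hpb : p + 2 ≤ b := by
      have : r * p < r * (b-1) := by omega
      have := Nat.lt_of_mul_lt_mul_left this
      omega
    -- the three witness indices
    set k1 := a - 1 with hk1
    set k2 := r*p + (r-1) with hk2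
    set k3 := r*p + r + (s-1) with hk3
    have hk12 : k1 < k2 := by omega
    have hk23 : k2 < k3 := by omega
    -- coefficient values
    have hc1 : (qAnalog a * qAnalogPow b r).coeff k1 = (p : ℤ) + 1 := by
      rw [coeff_eq', E_empty a b r k1 (by omega), Dset_card b r k1 (by omega)]
      have hdiv : k1 / r = p := by
        have : k1 = r * p + (s - 1) := by omega
        rw [this, Nat.mul_add_div (by omega), Nat.div_eq_of_lt (by omega)]
        omega
      rw [hdiv]
      simp only [Finset.card_empty]
      push_cast
      omega
    have hc2 : (qAnalog a * qAnalogPow b r).coeff k2 = (p : ℤ) := by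
      rw [coeff_eq', Eset_eq_D a b r k2 (by omega), Dset_card b r k2 (by omega),
        Dset_card b r (k2 - a) (by omega)]
      have hdiv : k2 / r = p := by
        rw [hk2, Nat.mul_add_div (by omega), Nat.div_eq_of_lt (by omega)]
        omega
      have hdiv2 : (k2 - a) / r = 0 := Nat.div_eq_of_lt (by omega)
      rw [hdiv, hdiv2]
      push_cast
      omega
    have hc3 : (qAnalog a * qAnalogPow b r).coeff k3 = (p : ℤ) + 1 := by
      rw [coeff_eq', Eset_eq_D a b r k3 (by omega), Dset_card b r k3 (by omega),
        Dset_card b r (k3 - a) (by omega)]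
      have hdiv : k3 / r = p + 1 := by
        have : k3 = r * (p+1) + (s - 1) := by rw [Nat.mul_succ]
        rw [this, Nat.mul_add_div (by omega), Nat.div_eq_of_lt (by omega)]
      have hdiv2 : (k3 - a) / r = 0 := Nat.div_eq_of_lt (by omega)
      rw [hdiv, hdiv2]
      push_cast
      omega
    obtain ⟨M, hinc, hdec⟩ := hU
    rcases le_or_gt M k2 with hM | hM
    · have := decChain hdec hM (le_of_lt hk23)
      rw [hc2, hc3] at this
      omega
    · have := incChain hinc k1 k2 (le_of_lt hk12) (by omega)
      rw [hc1, hc2] at this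
      omega
  · rintro (hle | ⟨c, rfl⟩)
    · refine ⟨a - 1, ?_, dec1 a b r ha hb hr hle⟩
      intro k hk
      exact inc_lemma a b r k (by omega)
    · have hc : 1 ≤ c := by
        rcases Nat.eq_zero_or_pos c with h0 | h0
        · subst h0; simp at ha
        · exact h0
      refine ⟨r*c - 1, ?_, dec2 b r c hb hr hc⟩
      intro k hk
      exact inc_lemma (r*c) b r k (by omega)
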